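/- Let g ∈ A be a unit and d ≥ 0 a natural number. Then: if T(g) = X^{−2d}·(R_d + Q)·g, then T(X^{−d}·g) = Q·(X^{−d}·g); if T(g) = X^{−2d}·(R_d − 1)·g, then T(X^{−d}·g) = −(X^{−d}·g); if T(g) = (Q·X^{2d} − R_d)·g, then T(X^{d}·g) = Q·(X^{d}·g); and if T(g) = (−X^{2d} − R_d)·g, then T(X^{d}·g) = −(X^{d}·g). -/

import Mathlib

open LaurentPolynomial

/-- `R_d = Σ_{j=1}^{d} (b·X^{2j} + c·X^{2j−1})`. -/
noncomputable def Rpoly {K : Type*} [Field K] (u v : K) (d : ℕ) : K[T;T⁻¹] :=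
  ∑ j ∈ Finset.range d, (C (u * v - 1) * T (2 * (j : ℤ) + 2) + C (u - v) * T (2 * (j : ℤ) + 1))

lemma Tsq_sub_one_ne {K : Type*} [Field K] : (T 2 - 1 : K[T;T⁻¹]) ≠ 0 := by
  intro h
  have h2 : (T 2 : K[T;T⁻¹]) = T 0 := by rw [T_zero]; exact sub_eq_zero.mp h
  have h3 := congrArg LaurentPolynomial.degree h2
  rw [degree_T, degree_T] at h3
  norm_num at h3

lemma T_mul_T {K : Type*} [Field K] (m n : ℤ) : (T m * T n : K[T;T⁻¹]) = T (m + n) :=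
  (T_add m n).symm

/-- telescoping identity: `(X²−1)·R_d = (b·X²+c·X)·(X^{2d}−1)`. -/
lemma key_R {K : Type*} [Field K] (u v : K) (d : ℕ) :
    (T 2 - 1) * Rpoly u v d
      = (C (u * v - 1) * T 2 + C (u - v) * T 1) * (T (d : ℤ) * T (d : ℤ) - 1) := by
  induction d with
  | zero => simp [Rpoly]
  | succ d ih =>
    rw [Rpoly, Finset.sum_range_succ, ← Rpoly]
    have e1 : (T (2 * (d : ℤ) + 2) : K[T;T⁻¹]) = T (d : ℤ) * T (d : ℤ) * T 1 * T 1 := by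
      rw [T_mul_T, T_mul_T, T_mul_T]; ring_nf
    have e2 : (T (2 * (d : ℤ) + 1) : K[T;T⁻¹]) = T (d : ℤ) * T (d : ℤ) * T 1 := by
      rw [T_mul_T, T_mul_T]; ring_nf
    have e3 : (T ((d + 1 : ℕ) : ℤ) : K[T;T⁻¹]) = T (d : ℤ) * T 1 := by
      rw [T_mul_T]; norm_num
    have e4 : (T 2 : K[T;T⁻¹]) = T 1 * T 1 := by rw [T_mul_T]; norm_num
    rw [e1, e2, e3]
    rw [e4] at ih ⊢
    linear_combination ih

/-- main engine: from the Bernstein relation and `𝒯 g = f·g`, an identity on `f`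
produces an eigenvector. -/
lemma aux_eig {K : Type*} [Field K] (u v : K)
    (𝒯 : K[T;T⁻¹] →ₗ[K] K[T;T⁻¹])
    (hcomm : ∀ h x : K[T;T⁻¹],
      (T 2 - 1) * (𝒯 (h * x) - invert h * 𝒯 x)
        = (C (u * v - 1) * T 2 + C (u - v) * T 1) * (h - invert h) * x)
    (g f μ h h' : K[T;T⁻¹]) (hinv : invert h = h') (hf : 𝒯 g = f * g)
    (H : (T 2 - 1) * (h' * f) + (C (u * v - 1) * T 2 + C (u - v) * T 1) * (h - h')
        = (T 2 - 1) * (μ * h)) :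
    𝒯 (h * g) = μ * (h * g) := by
  have hc := hcomm h g
  rw [hinv, hf] at hc
  apply mul_left_cancel₀ (Tsq_sub_one_ne (K := K))
  linear_combination hc + g * H

/-- Let `𝒯` satisfy the quadratic relation `𝒯² = b·𝒯 + Q·id` and the
denominator-cleared Bernstein relation. If `g` is a unit and
`𝒯(g) = X^{−2d}·(R_d + Q)·g` (resp. `X^{−2d}·(R_d − 1)·g`, `(Q·X^{2d} − R_d)·g`,
`(−X^{2d} − R_d)·g`), then `X^{−d}·g` (resp. `X^{−d}·g`, `X^{d}·g`, `X^{d}·g`)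
is an eigenvector of `𝒯` with eigenvalue `Q` (resp. `−1`, `Q`, `−1`). -/
theorem statement14 {K : Type*} [Field K] (u v : K)
    (𝒯 : K[T;T⁻¹] →ₗ[K] K[T;T⁻¹])
    (hquad : ∀ x : K[T;T⁻¹], 𝒯 (𝒯 x) = C (u * v - 1) * 𝒯 x + C (u * v) * x)
    (hcomm : ∀ h x : K[T;T⁻¹],
      (T 2 - 1) * (𝒯 (h * x) - invert h * 𝒯 x)
        = (C (u * v - 1) * T 2 + C (u - v) * T 1) * (h - invert h) * x)
    (g : K[T;T⁻¹]) (hg : IsUnit g) (d : ℕ) :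
    (𝒯 g = T (-(2 * (d : ℤ))) * (Rpoly u v d + C (u * v)) * g →
      𝒯 (T (-(d : ℤ)) * g) = C (u * v) * (T (-(d : ℤ)) * g)) ∧
    (𝒯 g = T (-(2 * (d : ℤ))) * (Rpoly u v d - 1) * g →
      𝒯 (T (-(d : ℤ)) * g) = -(T (-(d : ℤ)) * g)) ∧
    (𝒯 g = (C (u * v) * T (2 * (d : ℤ)) - Rpoly u v d) * g →
      𝒯 (T (d : ℤ) * g) = C (u * v) * (T (d : ℤ) * g)) ∧
    (𝒯 g = (-T (2 * (d : ℤ)) - Rpoly u v d) * g →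
      𝒯 (T (d : ℤ) * g) = -(T (d : ℤ) * g)) := by
  have key := key_R u v d
  have hinvm : invert (T (-(d : ℤ)) : K[T;T⁻¹]) = T (d : ℤ) := by
    rw [invert_T, neg_neg]
  have hinvp : invert (T (d : ℤ) : K[T;T⁻¹]) = T (-(d : ℤ)) := invert_T _
  have h3 : (T (d : ℤ) * T (-(d : ℤ)) : K[T;T⁻¹]) = 1 := by rw [T_mul_T]; simp
  have hm2 : (T (-(2 * (d : ℤ))) : K[T;T⁻¹]) = T (-(d : ℤ)) * T (-(d : ℤ)) := by
    rw [T_mul_T]; ring_nf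
  have hp2 : (T (2 * (d : ℤ)) : K[T;T⁻¹]) = T (d : ℤ) * T (d : ℤ) := by
    rw [T_mul_T]; ring_nf
  set s : K[T;T⁻¹] := T 2 - 1 with hs
  set r : K[T;T⁻¹] := C (u * v - 1) * T 2 + C (u - v) * T 1 with hr
  refine ⟨fun hf => ?_, fun hf => ?_, fun hf => ?_, fun hf => ?_⟩
  · refine aux_eig u v 𝒯 hcomm g _ _ _ _ hinvm hf ?_
    rw [hm2]
    linear_combination T (-(d : ℤ)) * key +
      (s * Rpoly u v d * T (-(d : ℤ)) + s * C (u * v) * T (-(d : ℤ)) + r * T (d : ℤ)) * h3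
  · rw [show -(T (-(d : ℤ)) * g) = (-1 : K[T;T⁻¹]) * (T (-(d : ℤ)) * g) by ring]
    refine aux_eig u v 𝒯 hcomm g _ _ _ _ hinvm hf ?_
    rw [hm2]
    linear_combination T (-(d : ℤ)) * key +
      (s * Rpoly u v d * T (-(d : ℤ)) - s * T (-(d : ℤ)) + r * T (d : ℤ)) * h3
  · refine aux_eig u v 𝒯 hcomm g _ _ _ _ hinvp hf ?_
    rw [hp2]
    linear_combination (-(T (-(d : ℤ)))) * key +
      (s * C (u * v) * T (d : ℤ) - r * T (d : ℤ)) * h3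
  · rw [show -(T (d : ℤ) * g) = (-1 : K[T;T⁻¹]) * (T (d : ℤ) * g) by ring]
    refine aux_eig u v 𝒯 hcomm g _ _ _ _ hinvp hf ?_
    rw [hp2]
    linear_combination (-(T (-(d : ℤ)))) * key +
      (-s * T (d : ℤ) - r * T (d : ℤ)) * h3
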